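/- Let ξ = (w_1,…,w_N) ∈ Ξ with X_1(ξ) = {i : w_i = 0}, X_3(ξ) = {i : w_i = 1/n}, X_2(ξ) = {i : 0 < w_i < 1/n}, suppose F_Φ(ξ; i) = s for every i ∈ X_2(ξ), and suppose there exist ξ_0 ∈ Ξ and δ > 0 with Φ(ξ) − Φ(ξ_0) > δ. If X_2(ξ) is nonempty and X_1(ξ) is empty, then X_3(ξ) is nonempty and max_{i ∈ X_3(ξ)} F_Φ(ξ; i) − s ≥ δ. -/
import Mathlib


theorem stmt_7
    (N : ℕ) (hN : 1 ≤ N)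
    (Δ : Set (Fin N → ℝ))
    (hΔ : Δ = {w : Fin N → ℝ | (∀ i, 0 ≤ w i) ∧ ∑ i, w i = 1})
    (Φ : (Fin N → ℝ) → ℝ)
    (hconv : ConvexOn ℝ Δ Φ)
    (F : (Fin N → ℝ) → (Fin N → ℝ) → ℝ)
    (hF : ∀ ξ ∈ Δ, ∀ η ∈ Δ,
      Filter.Tendsto (fun α : ℝ => (Φ ((1 - α) • ξ + α • η) - Φ ξ) / α)
        (nhdsWithin 0 (Set.Ioi 0)) (nhds (F ξ η)))
    (hlin : ∀ ξ ∈ Δ, ∀ η ∈ Δ, F ξ η = ∑ i, η i * F ξ (Pi.single i 1))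
    (n : ℕ) (hn1 : 1 ≤ n) (hnN : n ≤ N)
    (Ξ : Set (Fin N → ℝ))
    (hΞ : Ξ = {w : Fin N → ℝ | w ∈ Δ ∧ ∀ i, w i ≤ 1 / (n : ℝ)})
    (ξ : Fin N → ℝ) (hmem : ξ ∈ Ξ)
    (X1 X2 X3 : Set (Fin N))
    (hX1 : X1 = {i | ξ i = 0})
    (hX2 : X2 = {i | 0 < ξ i ∧ ξ i < 1 / (n : ℝ)})
    (hX3 : X3 = {i | ξ i = 1 / (n : ℝ)})
    (s : ℝ) (hs : ∀ i ∈ X2, F ξ (Pi.single i 1) = s)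
    (ξ0 : Fin N → ℝ) (hξ0 : ξ0 ∈ Ξ)
    (δ : ℝ) (hδ : 0 < δ)
    (hgap : Φ ξ - Φ ξ0 > δ)
    (hX2ne : X2.Nonempty) (hX1e : X1 = ∅) :
    X3.Nonempty ∧ sSup ((fun i => F ξ (Pi.single i 1)) '' X3) - s ≥ δ := by
  subst hΔ hΞ hX1 hX2 hX3
  obtain ⟨⟨hξnn, hξsum⟩, hξle⟩ := hmem
  obtain ⟨⟨hξ0nn, hξ0sum⟩, hξ0le⟩ := hξ0
  have hξΔ : ξ ∈ {w : Fin N → ℝ | (∀ i, 0 ≤ w i) ∧ ∑ i, w i = 1} := ⟨hξnn, hξsum⟩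
  have hξ0Δ : ξ0 ∈ {w : Fin N → ℝ | (∀ i, 0 ≤ w i) ∧ ∑ i, w i = 1} := ⟨hξ0nn, hξ0sum⟩
  set f : Fin N → ℝ := fun i => F ξ (Pi.single i 1) with hfdef
  -- directional derivative bounded by secant
  have hFle : F ξ ξ0 ≤ Φ ξ0 - Φ ξ := by
    refine le_of_tendsto (hF ξ hξΔ ξ0 hξ0Δ) ?_
    filter_upwards [Ioc_mem_nhdsGT_of_mem (by norm_num : (0:ℝ) ∈ Set.Ico (0:ℝ) 1)]
      with α hα
    obtain ⟨hα0, hα1⟩ := hα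
    have hc := hconv.2 hξΔ hξ0Δ (by linarith : (0:ℝ) ≤ 1 - α) hα0.le (by ring)
    rw [div_le_iff₀ hα0]
    simp only [smul_eq_mul] at hc
    nlinarith
  -- F ξ ξ = 0
  have hFself : F ξ ξ = 0 := by
    have h1 := hF ξ hξΔ ξ hξΔ
    have h2 : (fun α : ℝ => (Φ ((1 - α) • ξ + α • ξ) - Φ ξ) / α) = fun _ => (0:ℝ) := by
      funext α
      have hx : (1 - α) • ξ + α • ξ = ξ := by
        rw [← add_smul]
        norm_num
      rw [hx]
      simp
    rw [h2] at h1
    exact tendsto_nhds_unique h1 tendsto_const_nhds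
  have hpos : ∀ i, 0 < ξ i := by
    intro i
    rcases lt_or_eq_of_le (hξnn i) with h | h
    · exact h
    · exact absurd (Set.eq_empty_iff_forall_notMem.mp hX1e i) (by simp [← h])
  have h0 : ∑ i, ξ i * f i = 0 := by
    rw [← hlin ξ hξΔ ξ hξΔ, hFself]
  have hneg : ∑ i, ξ0 i * f i < -δ := by
    rw [← hlin ξ hξΔ ξ0 hξ0Δ]
    linarith
  classical
  set T : Finset (Fin N) := Finset.univ.filter (fun i => ξ i = 1 / (n : ℝ)) with hTdef
  -- split the sum
  have hsplit : ∀ g : Fin N → ℝ, ∑ i, g i = ∑ i ∈ T, g i + ∑ i ∈ Tᶜ, g i := by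
    intro g
    rw [Finset.sum_add_sum_compl]
  have hcomp : ∀ i ∈ Tᶜ, f i = s := by
    intro i hi
    apply hs
    simp only [hTdef, Finset.mem_compl, Finset.mem_filter, Finset.mem_univ, true_and] at hi
    exact ⟨hpos i, lt_of_le_of_ne (hξle i) hi⟩
  have hkey : ∑ i, (ξ i - ξ0 i) * f i > δ := by
    have : ∑ i, (ξ i - ξ0 i) * f i = ∑ i, ξ i * f i - ∑ i, ξ0 i * f i := by
      rw [← Finset.sum_sub_distrib]
      congr 1; funext i; ring
    rw [this, h0]
    linarith
  have hsumT : ∑ i, (ξ i - ξ0 i) * f i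
      = ∑ i ∈ T, (ξ i - ξ0 i) * f i + s * ∑ i ∈ Tᶜ, (ξ i - ξ0 i) := by
    rw [hsplit (fun i => (ξ i - ξ0 i) * f i), Finset.mul_sum]
    congr 1
    apply Finset.sum_congr rfl
    intro i hi
    rw [hcomp i hi]; ring
  set t : ℝ := ∑ i ∈ T, (ξ i - ξ0 i) with htdef
  have hcompsum : ∑ i ∈ Tᶜ, (ξ i - ξ0 i) = -t := by
    have := hsplit (fun i => ξ i - ξ0 i)
    have htot : ∑ i, (ξ i - ξ0 i) = 0 := by
      rw [Finset.sum_sub_distrib, hξsum, hξ0sum]; ring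
    rw [htot] at this
    linarith [this]
  have hkey2 : ∑ i ∈ T, (ξ i - ξ0 i) * f i - s * t > δ := by
    rw [hsumT, hcompsum] at hkey
    linarith
  have hTne : T.Nonempty := by
    by_contra h
    rw [Finset.not_nonempty_iff_eq_empty] at h
    rw [h] at hkey2
    simp [htdef, h] at hkey2
    linarith
  obtain ⟨i0, hi0⟩ := hTne
  have hi0' : ξ i0 = 1 / (n : ℝ) := by
    simpa [hTdef] using hi0
  have hX3ne : {i | ξ i = 1 / (n : ℝ)}.Nonempty := ⟨i0, hi0'⟩
  refine ⟨hX3ne, ?_⟩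
  set M : ℝ := sSup (f '' {i | ξ i = 1 / (n : ℝ)}) with hMdef
  have hfleM : ∀ i ∈ T, f i ≤ M := by
    intro i hi
    have hi' : ξ i = 1 / (n : ℝ) := by simpa [hTdef] using hi
    exact le_csSup (Set.toFinite _).bddAbove ⟨i, hi', rfl⟩
  have hnn : ∀ i ∈ T, 0 ≤ ξ i - ξ0 i := by
    intro i hi
    have hi' : ξ i = 1 / (n : ℝ) := by simpa [hTdef] using hi
    have := hξ0le i
    linarith
  have hsumle : ∑ i ∈ T, (ξ i - ξ0 i) * f i ≤ t * M := by
    rw [htdef, Finset.sum_mul]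
    apply Finset.sum_le_sum
    intro i hi
    exact mul_le_mul_of_nonneg_left (hfleM i hi) (hnn i hi)
  have ht0 : 0 ≤ t := Finset.sum_nonneg hnn
  have ht1 : t ≤ 1 := by
    have h1 : t ≤ ∑ i ∈ T, ξ i := by
      rw [htdef, Finset.sum_sub_distrib]
      have : 0 ≤ ∑ i ∈ T, ξ0 i := Finset.sum_nonneg (fun i _ => hξ0nn i)
      linarith
    have h2 : ∑ i ∈ T, ξ i ≤ ∑ i, ξ i :=
      Finset.sum_le_sum_of_subset_of_nonneg (Finset.subset_univ T)
        (fun i _ _ => hξnn i)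
    rw [hξsum] at h2
    linarith
  have hd : δ < t * (M - s) := by nlinarith
  have hMs : 0 < M - s := by
    by_contra h
    push_neg at h
    nlinarith [mul_nonpos_of_nonneg_of_nonpos ht0 h]
  have : t * (M - s) ≤ M - s := by nlinarith
  linarith
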